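/- Let K be a field, V a K-vector space, and A, B subspaces of V. Then, as subspaces of V ⊗ V, (A ⊗ A) ∩ (B ⊗ B) = (A ∩ B) ⊗ (A ∩ B). -/

import Mathlib

open scoped TensorProduct
open LinearMap

section Aux
variable {K : Type} [Field K] {V : Type} [AddCommGroup V] [Module K V]

lemma range_rTensor_subtype (P : Submodule K V) :
    LinearMap.range (rTensor V P.subtype) = LinearMap.ker (rTensor V P.mkQ) :=
  (LinearMap.exact_iff.mp
    (Module.Flat.rTensor_exact V (LinearMap.exact_subtype_mkQ P))).symm

lemma range_lTensor_subtype {W : Type} [AddCommGroup W] [Module K W] (P : Submodule K V) :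
    LinearMap.range (lTensor W P.subtype) = LinearMap.ker (lTensor W P.mkQ) :=
  (LinearMap.exact_iff.mp
    (Module.Flat.lTensor_exact W (LinearMap.exact_subtype_mkQ P))).symm

lemma ker_rTensor_inf (A B : Submodule K V) :
    ker (rTensor V A.mkQ) ⊓ ker (rTensor V B.mkQ) = ker (rTensor V (A ⊓ B).mkQ) := by
  set f : V →ₗ[K] (V ⧸ A) × (V ⧸ B) := LinearMap.prod A.mkQ B.mkQ with hf
  have hker : A ⊓ B = ker f := by
    ext v
    simp [hf, Submodule.mem_inf, LinearMap.mem_ker, Prod.ext_iff]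
  set g : (V ⧸ (A ⊓ B)) →ₗ[K] (V ⧸ A) × (V ⧸ B) :=
    (A ⊓ B).liftQ f (le_of_eq hker) with hg
  have hginj : Function.Injective g := by
    rw [← LinearMap.ker_eq_bot, hg, Submodule.ker_liftQ_eq_bot]
    exact le_of_eq hker.symm
  have hcomp : g ∘ₗ (A ⊓ B).mkQ = f := Submodule.liftQ_mkQ _ f (le_of_eq hker)
  have heq : (TensorProduct.prodLeft K K (V ⧸ A) (V ⧸ B) V).toLinearMap ∘ₗ rTensor V f
      = LinearMap.prod (rTensor V A.mkQ) (rTensor V B.mkQ) := by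
    ext v w <;> simp [hf]
  ext x
  simp only [Submodule.mem_inf, LinearMap.mem_ker]
  constructor
  · rintro ⟨hxa, hxb⟩
    have hfx : rTensor V f x = 0 := by
      have h0 : (TensorProduct.prodLeft K K (V ⧸ A) (V ⧸ B) V).toLinearMap (rTensor V f x)
          = 0 := by
        rw [← LinearMap.comp_apply, heq]
        simp [LinearMap.prod_apply, hxa, hxb]
      exact (LinearMap.map_eq_zero_iff _ (TensorProduct.prodLeft K K (V ⧸ A) (V ⧸ B) V).injective).mp h0
    have h1 : rTensor V g (rTensor V (A ⊓ B).mkQ x) = 0 := by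
      rw [← LinearMap.comp_apply, ← rTensor_comp, hcomp, hfx]
    exact (Module.Flat.rTensor_preserves_injective_linearMap g hginj)
      (by rw [h1, map_zero])
  · intro hx
    constructor
    · have h : rTensor V A.mkQ = rTensor V (LinearMap.fst K (V ⧸ A) (V ⧸ B) ∘ₗ f) := by
        congr 1
      rw [h, rTensor_comp, LinearMap.comp_apply, ← hcomp, rTensor_comp,
        LinearMap.comp_apply, hx]
      simp
    · have h : rTensor V B.mkQ = rTensor V (LinearMap.snd K (V ⧸ A) (V ⧸ B) ∘ₗ f) := by
        congr 1
      rw [h, rTensor_comp, LinearMap.comp_apply, ← hcomp, rTensor_comp,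
        LinearMap.comp_apply, hx]
      simp

lemma ker_lTensor_inf (A B : Submodule K V) :
    ker (lTensor V A.mkQ) ⊓ ker (lTensor V B.mkQ) = ker (lTensor V (A ⊓ B).mkQ) := by
  set f : V →ₗ[K] (V ⧸ A) × (V ⧸ B) := LinearMap.prod A.mkQ B.mkQ with hf
  have hker : A ⊓ B = ker f := by
    ext v
    simp [hf, Submodule.mem_inf, LinearMap.mem_ker, Prod.ext_iff]
  set g : (V ⧸ (A ⊓ B)) →ₗ[K] (V ⧸ A) × (V ⧸ B) :=
    (A ⊓ B).liftQ f (le_of_eq hker) with hg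
  have hginj : Function.Injective g := by
    rw [← LinearMap.ker_eq_bot, hg, Submodule.ker_liftQ_eq_bot]
    exact le_of_eq hker.symm
  have hcomp : g ∘ₗ (A ⊓ B).mkQ = f := Submodule.liftQ_mkQ _ f (le_of_eq hker)
  have heq : (TensorProduct.prodRight K K V (V ⧸ A) (V ⧸ B)).toLinearMap ∘ₗ lTensor V f
      = LinearMap.prod (lTensor V A.mkQ) (lTensor V B.mkQ) := by
    ext v w <;> simp [hf]
  ext x
  simp only [Submodule.mem_inf, LinearMap.mem_ker]
  constructor
  · rintro ⟨hxa, hxb⟩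
    have hfx : lTensor V f x = 0 := by
      have h0 : (TensorProduct.prodRight K K V (V ⧸ A) (V ⧸ B)).toLinearMap (lTensor V f x)
          = 0 := by
        rw [← LinearMap.comp_apply, heq]
        simp [LinearMap.prod_apply, hxa, hxb]
      exact (LinearMap.map_eq_zero_iff _ (TensorProduct.prodRight K K V (V ⧸ A) (V ⧸ B)).injective).mp h0
    have h1 : lTensor V g (lTensor V (A ⊓ B).mkQ x) = 0 := by
      rw [← LinearMap.comp_apply, ← lTensor_comp, hcomp, hfx]
    exact (Module.Flat.lTensor_preserves_injective_linearMap g hginj)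
      (by rw [h1, map_zero])
  · intro hx
    constructor
    · have h : lTensor V A.mkQ = lTensor V (LinearMap.fst K (V ⧸ A) (V ⧸ B) ∘ₗ f) := by
        congr 1
      rw [h, lTensor_comp, LinearMap.comp_apply, ← hcomp, lTensor_comp,
        LinearMap.comp_apply, hx]
      simp
    · have h : lTensor V B.mkQ = lTensor V (LinearMap.snd K (V ⧸ A) (V ⧸ B) ∘ₗ f) := by
        congr 1
      rw [h, lTensor_comp, LinearMap.comp_apply, ← hcomp, lTensor_comp,
        LinearMap.comp_apply, hx]
      simp

lemma range_mapIncl_eq (P Q : Submodule K V) :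
    LinearMap.range (TensorProduct.mapIncl P Q)
      = ker (rTensor V P.mkQ) ⊓ ker (lTensor V Q.mkQ) := by
  apply le_antisymm
  · rintro _ ⟨z, rfl⟩
    rw [Submodule.mem_inf]
    constructor <;> rw [LinearMap.mem_ker] <;>
      induction z using TensorProduct.induction_on with
      | zero => simp
      | tmul p q =>
        simp [TensorProduct.mapIncl, (Submodule.Quotient.mk_eq_zero _).mpr p.2,
          (Submodule.Quotient.mk_eq_zero _).mpr q.2]
      | add a b ha hb =>
        simp only [TensorProduct.mapIncl] at ha hb
        simp [ha, hb]
  · rintro x hx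
    rw [Submodule.mem_inf] at hx
    obtain ⟨hxa, hxb⟩ := hx
    rw [← range_rTensor_subtype] at hxa
    obtain ⟨y, rfl⟩ := hxa
    rw [LinearMap.mem_ker] at hxb
    have hcomm : lTensor V Q.mkQ (rTensor V P.subtype y)
        = rTensor (V ⧸ Q) P.subtype (lTensor P Q.mkQ y) := by
      rw [← LinearMap.comp_apply, ← LinearMap.comp_apply, lTensor_comp_rTensor,
        rTensor_comp_lTensor]
    have hy : lTensor P Q.mkQ y = 0 := by
      have hinj := Module.Flat.rTensor_preserves_injective_linearMap
        (M := V ⧸ Q) P.subtype P.injective_subtype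
      apply hinj
      rw [← hcomm, hxb, map_zero]
    have hmem : y ∈ LinearMap.range (lTensor P Q.subtype) := by
      rw [range_lTensor_subtype]; exact hy
    obtain ⟨z, rfl⟩ := hmem
    refine ⟨z, ?_⟩
    rw [TensorProduct.mapIncl, ← LinearMap.comp_apply, rTensor_comp_lTensor]

end Aux

/-- For subspaces `A`, `B` of a `K`-vector space `V`, one has
`(A ⊗ A) ⊓ (B ⊗ B) = (A ⊓ B) ⊗ (A ⊓ B)` as subspaces of `V ⊗ V`, where `P ⊗ Q` denotes
the range of the canonical map `P ⊗ Q → V ⊗ V`. -/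
theorem inf_tensor_square (K : Type) [Field K]
    (V : Type) [AddCommGroup V] [Module K V] (A B : Submodule K V) :
    LinearMap.range (TensorProduct.mapIncl A A) ⊓
        LinearMap.range (TensorProduct.mapIncl B B) =
      LinearMap.range (TensorProduct.mapIncl (A ⊓ B) (A ⊓ B)) := by
  rw [range_mapIncl_eq, range_mapIncl_eq, range_mapIncl_eq, ← ker_rTensor_inf,
    ← ker_lTensor_inf]
  ac_rfl
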